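/- For every ε > 0, I₁(ε)² - I₀(ε) I₂(ε) > 0, where I_k denotes the modified Bessel function of the first kind of order k. -/

import Mathlib

open MeasureTheory Filter

/-- Bessel function of the first kind of order `k` (integral representation). -/
noncomputable def besselJ (k : ℕ) (r : ℝ) : ℝ :=
  (r / 2) ^ k / (Real.sqrt Real.pi * Real.Gamma ((k : ℝ) + 1 / 2)) *
    ∫ θ in (0:ℝ)..Real.pi, Real.cos (r * Real.cos θ) * Real.sin θ ^ (2 * k)

/-- Modified Bessel function of the first kind of order `k`. -/
noncomputable def besselI (k : ℕ) (r : ℝ) : ℝ :=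
  (r / 2) ^ k / (Real.sqrt Real.pi * Real.Gamma ((k : ℝ) + 1 / 2)) *
    ∫ θ in (0:ℝ)..Real.pi, Real.exp (r * Real.cos θ) * Real.sin θ ^ (2 * k)

/-- Modified Bessel function of the second kind of order `k`. -/
noncomputable def besselK (k : ℕ) (r : ℝ) : ℝ :=
  ∫ t in Set.Ioi (0:ℝ), Real.exp (-(r * Real.cosh t)) * Real.cosh ((k : ℝ) * t)

open Real intervalIntegral Metric

noncomputable def Fb (n : ℕ) (r : ℝ) : ℝ := ∫ θ in (0:ℝ)..π, exp (r * cos θ) * sin θ ^ n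
noncomputable def Eb (n : ℕ) (r : ℝ) : ℝ := ∫ θ in (0:ℝ)..π, exp (r * cos θ) * sin θ ^ n * cos θ

lemma hasDerivAt_Fb (n : ℕ) (r : ℝ) : HasDerivAt (Fb n) (Eb n r) r := by
  have h := intervalIntegral.hasDerivAt_integral_of_dominated_loc_of_deriv_le
    (F := fun x θ => exp (x * cos θ) * sin θ ^ n)
    (F' := fun x θ => exp (x * cos θ) * sin θ ^ n * cos θ)
    (x₀ := r) (a := (0:ℝ)) (b := π) (μ := volume)
    (bound := fun _ => exp (|r| + 1)) (ball_mem_nhds r one_pos) ?_ ?_ ?_ ?_ ?_ ?_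
  · exact h.2
  · filter_upwards with x
    exact (Continuous.aestronglyMeasurable (by fun_prop)).restrict
  · exact (Continuous.intervalIntegrable (by fun_prop)) _ _
  · exact (Continuous.aestronglyMeasurable (by fun_prop)).restrict
  · filter_upwards with θ hθ x hx
    have h1 : |sin θ ^ n| ≤ 1 := by
      rw [abs_pow]; exact pow_le_one₀ (abs_nonneg _) (abs_sin_le_one θ)
    have h2 : |cos θ| ≤ 1 := abs_cos_le_one θ
    have hxr : |x| ≤ |r| + 1 := by
      have := abs_lt.1 (by simpa [dist_eq] using (mem_ball.1 hx))
      cases abs_cases x <;> cases abs_cases r <;> linarith [this.1, this.2]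
    have h3 : x * cos θ ≤ |r| + 1 := by
      calc x * cos θ ≤ |x| * |cos θ| := by rw [← abs_mul]; exact le_abs_self _
        _ ≤ (|r| + 1) * 1 := mul_le_mul hxr h2 (abs_nonneg _) (by positivity)
        _ = |r| + 1 := mul_one _
    rw [norm_eq_abs, abs_mul, abs_mul, abs_exp]
    calc exp (x * cos θ) * |sin θ ^ n| * |cos θ| ≤ exp (|r| + 1) * 1 * 1 := by
          gcongr
      _ = exp (|r| + 1) := by ring
  · exact (Continuous.intervalIntegrable (by fun_prop)) _ _
  · filter_upwards with θ hθ x hx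
    have : HasDerivAt (fun x : ℝ => exp (x * cos θ)) (exp (x * cos θ) * cos θ) x := by
      simpa using ((hasDerivAt_id x).mul_const (cos θ)).exp
    simpa [mul_comm, mul_assoc, mul_left_comm] using this.mul_const (sin θ ^ n)

lemma contFE (r : ℝ) (n : ℕ) : Continuous (fun θ => exp (r * cos θ) * sin θ ^ n * cos θ) := by
  fun_prop

lemma L1 (r : ℝ) (n : ℕ) : ((n:ℝ) + 1) * Eb n r = r * Fb (n + 2) r := by
  have key : ∀ θ ∈ Set.uIcc (0:ℝ) π,
      HasDerivAt (fun θ => exp (r * cos θ) * sin θ ^ (n + 1))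
        (((n:ℝ) + 1) * (exp (r * cos θ) * sin θ ^ n * cos θ)
          - r * (exp (r * cos θ) * sin θ ^ (n + 2))) θ := by
    intro θ _
    have hc : HasDerivAt (fun θ : ℝ => exp (r * cos θ)) (exp (r * cos θ) * (r * (-sin θ))) θ :=
      ((hasDerivAt_cos θ).const_mul r).exp
    have hs : HasDerivAt (fun θ : ℝ => sin θ ^ (n + 1))
        ((↑(n+1) : ℝ) * sin θ ^ n * cos θ) θ := by
      simpa using (hasDerivAt_sin θ).fun_pow (n + 1)
    refine (hc.fun_mul hs).congr_deriv ?_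
    push_cast
    ring
  have h0 : (∫ θ in (0:ℝ)..π, (((n:ℝ) + 1) * (exp (r * cos θ) * sin θ ^ n * cos θ)
      - r * (exp (r * cos θ) * sin θ ^ (n + 2)))) = 0 := by
    rw [intervalIntegral.integral_eq_sub_of_hasDerivAt key
      (Continuous.intervalIntegrable (by fun_prop) _ _)]
    simp
  rw [intervalIntegral.integral_sub ((Continuous.intervalIntegrable (by fun_prop)) _ _)
    ((Continuous.intervalIntegrable (by fun_prop)) _ _),
    intervalIntegral.integral_const_mul, intervalIntegral.integral_const_mul] at h0
  unfold Eb Fb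
  linarith

lemma L2 (r : ℝ) (n : ℕ) :
    ((n:ℝ) + 1) * Fb n r - ((n:ℝ) + 2) * Fb (n + 2) r - r * Eb (n + 2) r = 0 := by
  have key : ∀ θ ∈ Set.uIcc (0:ℝ) π,
      HasDerivAt (fun θ => exp (r * cos θ) * sin θ ^ (n + 1) * cos θ)
        (((n:ℝ) + 1) * (exp (r * cos θ) * sin θ ^ n)
          - ((n:ℝ) + 2) * (exp (r * cos θ) * sin θ ^ (n + 2))
          - r * (exp (r * cos θ) * sin θ ^ (n + 2) * cos θ)) θ := by
    intro θ _
    have hc : HasDerivAt (fun θ : ℝ => exp (r * cos θ)) (exp (r * cos θ) * (r * (-sin θ))) θ :=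
      ((hasDerivAt_cos θ).const_mul r).exp
    have hs : HasDerivAt (fun θ : ℝ => sin θ ^ (n + 1))
        ((↑(n+1) : ℝ) * sin θ ^ n * cos θ) θ := by
      simpa using (hasDerivAt_sin θ).fun_pow (n + 1)
    have := (hc.fun_mul hs).fun_mul (hasDerivAt_cos θ)
    refine this.congr_deriv ?_
    symm
    have hcs : cos θ ^ 2 = 1 - sin θ ^ 2 := cos_sq' θ
    push_cast
    linear_combination (-(((n:ℝ) + 1) * exp (r * cos θ) * sin θ ^ n)) * hcs
  have h0 : (∫ θ in (0:ℝ)..π, (((n:ℝ) + 1) * (exp (r * cos θ) * sin θ ^ n)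
      - ((n:ℝ) + 2) * (exp (r * cos θ) * sin θ ^ (n + 2))
      - r * (exp (r * cos θ) * sin θ ^ (n + 2) * cos θ))) = 0 := by
    rw [intervalIntegral.integral_eq_sub_of_hasDerivAt key
      (Continuous.intervalIntegrable (by fun_prop) _ _)]
    simp
  rw [intervalIntegral.integral_sub (((Continuous.intervalIntegrable (by fun_prop)) _ _).sub
      ((Continuous.intervalIntegrable (by fun_prop)) _ _))
      ((Continuous.intervalIntegrable (by fun_prop)) _ _),
    intervalIntegral.integral_sub ((Continuous.intervalIntegrable (by fun_prop)) _ _)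
      ((Continuous.intervalIntegrable (by fun_prop)) _ _),
    intervalIntegral.integral_const_mul, intervalIntegral.integral_const_mul,
    intervalIntegral.integral_const_mul] at h0
  unfold Eb Fb
  linarith

noncomputable def Pb (r : ℝ) : ℝ := r ^ 2 * Fb 2 r ^ 2 - r ^ 2 * Fb 0 r * Fb 4 r / 3

lemma hasDerivAt_Pb (r : ℝ) : HasDerivAt Pb (2 * r / 3 * Fb 0 r * Fb 4 r) r := by
  have h0 := hasDerivAt_Fb 0 r
  have h2 := hasDerivAt_Fb 2 r
  have h4 := hasDerivAt_Fb 4 r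
  have hpow : HasDerivAt (fun x : ℝ => x ^ 2) (2 * r) r := by
    simpa using hasDerivAt_pow 2 r
  have t1 : HasDerivAt (fun x => x ^ 2 * Fb 2 x ^ 2)
      (2 * r * Fb 2 r ^ 2 + r ^ 2 * (2 * Fb 2 r * Eb 2 r)) r := by
    have hsq : HasDerivAt (fun x => Fb 2 x ^ 2) (2 * Fb 2 r * Eb 2 r) r := by
      simpa using h2.fun_pow 2
    simpa using hpow.fun_mul hsq
  have t2 : HasDerivAt (fun x => x ^ 2 * Fb 0 x * Fb 4 x / 3)
      (((2 * r * Fb 0 r + r ^ 2 * Eb 0 r) * Fb 4 r + r ^ 2 * Fb 0 r * Eb 4 r) / 3) r := by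
    exact ((hpow.mul h0).mul h4).div_const 3
  have := t1.sub t2
  refine this.congr_deriv ?_
  symm
  have i1 := L1 r 0
  have i2 := L1 r 2
  have i3 := L2 r 0
  have i4 := L2 r 2
  push_cast at i1 i2 i3 i4
  -- i1 : 1 * Eb 0 r = r * Fb 2 r
  -- i2 : 3 * Eb 2 r = r * Fb 4 r
  -- i3 : 1 * Fb 0 r - 2 * Fb 2 r - r * Eb 2 r = 0
  -- i4 : 3 * Fb 2 r - 4 * Fb 4 r - r * Eb 4 r = 0
  linear_combination (r ^ 2 / 3 * Fb 4 r) * i1 + (-(r ^ 2 / 3) * Fb 2 r) * i2 +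
    (r * Fb 2 r) * i3 + (-(r / 3) * Fb 0 r) * i4

lemma Fb_pos (n : ℕ) (r : ℝ) : 0 < Fb n r := by
  apply intervalIntegral.intervalIntegral_pos_of_pos_on
    ((Continuous.intervalIntegrable (by fun_prop)) _ _)
  · intro x hx
    have hs : 0 < sin x := sin_pos_of_pos_of_lt_pi hx.1 hx.2
    positivity
  · exact pi_pos

lemma Pb_pos (ε : ℝ) (hε : 0 < ε) : 0 < Pb ε := by
  have hmono : StrictMonoOn Pb (Set.Icc 0 ε) := by
    apply strictMonoOn_of_deriv_pos (convex_Icc 0 ε)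
    · exact fun x _ => (hasDerivAt_Pb x).continuousAt.continuousWithinAt
    · intro x hx
      rw [interior_Icc] at hx
      rw [(hasDerivAt_Pb x).deriv]
      have := Fb_pos 0 x
      have := Fb_pos 4 x
      have := hx.1
      positivity
  have h0 : Pb 0 = 0 := by simp [Pb]
  have := hmono (Set.left_mem_Icc.2 hε.le) (Set.right_mem_Icc.2 hε.le) hε
  linarith [this]

theorem besselI_sq_sub_pos (ε : ℝ) (hε : 0 < ε) :
    0 < besselI 1 ε ^ 2 - besselI 0 ε * besselI 2 ε := by
  have hπ : (0:ℝ) < π := pi_pos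
  have hsπ : Real.sqrt π * Real.sqrt π = π := Real.mul_self_sqrt hπ.le
  have hs0 : Real.sqrt π ≠ 0 := by positivity
  have hg2 : Real.Gamma (3/2) = Real.sqrt π / 2 := by
    rw [show (3/2:ℝ) = 1/2 + 1 by norm_num, Real.Gamma_add_one (by norm_num),
      Real.Gamma_one_half_eq]
    ring
  have hg3 : Real.Gamma (5/2) = 3 * Real.sqrt π / 4 := by
    rw [show (5/2:ℝ) = 3/2 + 1 by norm_num, Real.Gamma_add_one (by norm_num), hg2]
    ring
  have b0 : besselI 0 ε = Fb 0 ε / π := by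
    simp only [besselI, Fb]
    norm_num [Real.Gamma_one_half_eq]
    rw [← hsπ]
    field_simp
    rw [Real.sqrt_sq (Real.sqrt_nonneg _)]
  have b1 : besselI 1 ε = ε * Fb 2 ε / π := by
    simp only [besselI, Fb]
    norm_num [hg2]
    rw [← hsπ]
    field_simp
    rw [Real.sqrt_sq (Real.sqrt_nonneg _)]
  have b2 : besselI 2 ε = ε ^ 2 * Fb 4 ε / (3 * π) := by
    simp only [besselI, Fb]
    norm_num [hg3]
    rw [← hsπ]
    field_simp
    rw [Real.sqrt_sq (Real.sqrt_nonneg _)]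
    ring
  rw [b0, b1, b2]
  have key : (ε * Fb 2 ε / π) ^ 2 - Fb 0 ε / π * (ε ^ 2 * Fb 4 ε / (3 * π)) = Pb ε / π ^ 2 := by
    unfold Pb
    field_simp
  rw [key]
  exact div_pos (Pb_pos ε hε) (by positivity)
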